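/- For every d ≥ 3, the big-Jordan-type polynomial F = x^d + x y^{d-1} + y z^{d-1} ∈ ℂ[x,y,z] is irreducible in ℂ[x,y,z] and smooth: the only common zero (x,y,z) ∈ ℂ³ of ∂F/∂x, ∂F/∂y, ∂F/∂z is (0,0,0). -/

import Mathlib

open MvPolynomial

private noncomputable abbrev bjY : MvPolynomial (Fin 2) ℂ := MvPolynomial.X 0
private noncomputable abbrev bjZ : MvPolynomial (Fin 2) ℂ := MvPolynomial.X 1

private lemma bj_eisenstein_irred (e : ℕ) :
    Irreducible (Polynomial.X ^ (e+3) + (Polynomial.C (bjY ^ (e+2)) * Polynomial.X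
      + Polynomial.C (bjY * bjZ ^ (e+2))) : Polynomial (MvPolynomial (Fin 2) ℂ)) := by
  set p : Polynomial (MvPolynomial (Fin 2) ℂ) :=
    Polynomial.X ^ (e+3) + (Polynomial.C (bjY ^ (e+2)) * Polynomial.X
      + Polynomial.C (bjY * bjZ ^ (e+2))) with hp
  have hdlt : (Polynomial.C (bjY ^ (e+2)) * Polynomial.X
      + Polynomial.C (bjY * bjZ ^ (e+2))).degree < ((e+3 : ℕ) : WithBot ℕ) :=
    lt_of_le_of_lt Polynomial.degree_linear_le (by exact_mod_cast show (1:ℕ) < e+3 by omega)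
  have hmon : p.Monic := Polynomial.monic_X_pow_add hdlt
  have hdeg : p.natDegree = e + 3 := by
    have : p.degree = ((e+3 : ℕ) : WithBot ℕ) := by
      rw [hp, Polynomial.degree_add_eq_left_of_degree_lt (by rwa [Polynomial.degree_X_pow]),
        Polynomial.degree_X_pow]
    exact Polynomial.natDegree_eq_of_degree_eq_some this
  have hy : Prime bjY := by
    rw [← MulEquiv.prime_iff (finSuccEquiv ℂ 1).toMulEquiv]
    show Prime ((finSuccEquiv ℂ 1) (MvPolynomial.X 0))
    rw [finSuccEquiv_X_zero]
    exact Polynomial.prime_X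
  have hyz : ¬ bjY ∣ bjZ := by
    rintro ⟨q, hq⟩
    have := congrArg (MvPolynomial.eval (fun i : Fin 2 => if i = 0 then 0 else 1)) hq
    simp at this
  have hPprime : (Ideal.span {bjY}).IsPrime :=
    (Ideal.span_singleton_prime hy.ne_zero).mpr hy
  have heis : p.IsEisensteinAt (Ideal.span {bjY}) := by
    constructor
    · rw [hmon.leadingCoeff]
      intro h1
      exact hPprime.ne_top (Ideal.eq_top_of_isUnit_mem _ h1 isUnit_one)
    · intro n hn
      rw [hdeg] at hn
      rw [hp]
      simp only [Polynomial.coeff_add, Polynomial.coeff_X_pow, Polynomial.coeff_C_mul,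
        Polynomial.coeff_X, Polynomial.coeff_C]
      rw [if_neg (by omega)]
      by_cases h0 : n = 0
      · subst h0
        norm_num
        exact Ideal.mem_span_singleton.mpr (Dvd.intro _ rfl)
      · by_cases h1 : n = 1
        · subst h1
          norm_num
          exact Ideal.mem_span_singleton.mpr ⟨bjY ^ (e+1), by ring⟩
        · rw [if_neg (fun h => h1 h.symm), if_neg h0]
          simpa using Ideal.zero_mem _
    · rw [hp]
      simp only [Polynomial.coeff_add, Polynomial.coeff_X_pow, Polynomial.coeff_C_mul,
        Polynomial.coeff_X, Polynomial.coeff_C]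
      rw [if_neg (by omega : ¬(0:ℕ) = e+3)]
      norm_num
      rw [Ideal.span_singleton_pow, Ideal.mem_span_singleton]
      rintro hdvd
      rw [show bjY ^ 2 = bjY * bjY from sq bjY] at hdvd
      have h2 : bjY ∣ bjZ ^ (e+2) := (mul_dvd_mul_iff_left hy.ne_zero).mp hdvd
      exact hyz (hy.dvd_of_dvd_pow h2)
  exact heis.irreducible hPprime hmon.isPrimitive (by omega)

private lemma bj_image (e : ℕ) :
    (finSuccEquiv ℂ 2) (MvPolynomial.X 0 ^ (e+3) + MvPolynomial.X 0 * MvPolynomial.X 1 ^ (e+3-1)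
        + MvPolynomial.X 1 * MvPolynomial.X 2 ^ (e+3-1) : MvPolynomial (Fin 3) ℂ)
      = Polynomial.X ^ (e+3) + (Polynomial.C (bjY^(e+2)) * Polynomial.X
        + Polynomial.C (bjY * bjZ^(e+2))) := by
  have h1 : (MvPolynomial.X 1 : MvPolynomial (Fin 3) ℂ) = MvPolynomial.X (Fin.succ 0) := rfl
  have h2 : (MvPolynomial.X 2 : MvPolynomial (Fin 3) ℂ) = MvPolynomial.X (Fin.succ 1) := rfl
  rw [h1, h2]
  simp only [show e+3-1 = e+2 from rfl, map_add, map_mul, map_pow, finSuccEquiv_X_zero,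
    finSuccEquiv_X_succ]
  simp only [← Polynomial.C_pow, ← Polynomial.C_mul]
  ring

/-- For every `d ≥ 3` the big-Jordan-type polynomial
`x^d + x y^(d-1) + y z^(d-1)` is irreducible in `ℂ[x,y,z]` and smooth. -/
theorem big_jordan_type_irreducible_smooth (d : ℕ) (hd : 3 ≤ d) :
    Irreducible
      ((X 0 ^ d + X 0 * X 1 ^ (d - 1) + X 1 * X 2 ^ (d - 1) : MvPolynomial (Fin 3) ℂ)) ∧
    ∀ v : Fin 3 → ℂ,
      (∀ i, eval v (pderiv i
          (X 0 ^ d + X 0 * X 1 ^ (d - 1) + X 1 * X 2 ^ (d - 1) : MvPolynomial (Fin 3) ℂ)) = 0) →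
      v = 0 := by
  obtain ⟨e, rfl⟩ : ∃ e, d = e + 3 := ⟨d - 3, by omega⟩
  constructor
  · have hi : Irreducible ((finSuccEquiv ℂ 2)
        (X 0 ^ (e+3) + X 0 * X 1 ^ (e+3-1) + X 1 * X 2 ^ (e+3-1) : MvPolynomial (Fin 3) ℂ)) := by
      rw [bj_image]
      exact bj_eisenstein_irred e
    exact (MulEquiv.irreducible_iff (finSuccEquiv ℂ 2).toMulEquiv).mp hi
  · intro v h
    have h0 := h 0
    have h1 := h 1
    have h2 := h 2
    simp only [show e+3-1 = e+2 from rfl, map_add, pderiv_pow, pderiv_mul,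
      pderiv_X, Pi.single_eq_same, Pi.single_eq_of_ne, eval_add, eval_mul, eval_pow, eval_X,
      eval_C, map_natCast] at h0 h1 h2
    simp only [Pi.single_apply] at h0 h1 h2
    norm_num [show (2:Fin 3) ≠ 0 from by decide, show (2:Fin 3) ≠ 1 from by decide,
      show (0:Fin 3) ≠ 2 from by decide, show (1:Fin 3) ≠ 2 from by decide] at h0 h1 h2
    have he2 : (e:ℂ) + 2 ≠ 0 := by
      have : ((e+2 : ℕ):ℂ) ≠ 0 := Nat.cast_ne_zero.mpr (by omega)
      push_cast at this; exact this
    have he3 : (e:ℂ) + 3 ≠ 0 := by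
      have : ((e+3 : ℕ):ℂ) ≠ 0 := Nat.cast_ne_zero.mpr (by omega)
      push_cast at this; exact this
    have key : v 0 = 0 ∧ v 1 = 0 ∧ v 2 = 0 := by
      rcases h2 with h2 | h2 | h2
      · rw [h2] at h0 h1
        simp [he3, pow_eq_zero_iff] at h0 h1
        exact ⟨h0, h2, h1⟩
      · exact absurd h2 he2
      · rw [h2] at h1
        simp [he2, pow_eq_zero_iff] at h1
        rcases h1 with h1 | h1
        · rw [h1] at h0
          simp [he3, pow_eq_zero_iff] at h0
          exact ⟨h1, h0, h2⟩
        · rw [h1] at h0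
          simp [he3, pow_eq_zero_iff] at h0
          exact ⟨h0, h1, h2⟩
    funext i
    fin_cases i <;> simp [key.1, key.2.1, key.2.2]
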